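/- For natural numbers c, d, let f(c,d) be the maximum of e(A) over all bipartite graphs of the form A = B ⊔ C with k(B) ≤ c and k(C) ≤ d. Then: (1) f(c,d) = e*(c+1) + e*(d+1) for all c, d ∈ ℕ; and (2) if 1 ≤ d ≤ c then f(c+1, d−1) ≥ f(c, d). -/

import Mathlib

noncomputable section

/-- A bipartite graph: two disjoint finite vertex sets `L`, `R`
and a set of edges `E ⊆ L × R`. -/
structure BipGraph (V : Type) [DecidableEq V] where
  L : Finset V
  R : Finset V
  disj : Disjoint L R
  E : Finset (V × V)
  E_sub : E ⊆ L ×ˢ R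

namespace BipGraph

variable {V : Type} [DecidableEq V]

/-- the vertex set -/
def verts (A : BipGraph V) : Finset V := A.L ∪ A.R

/-- `v A` is the number of vertices of `A` -/
def v (A : BipGraph V) : ℕ := A.verts.card

/-- `e A` is the number of edges of `A` -/
def e (A : BipGraph V) : ℕ := A.E.card

/-- the underlying simple graph on the vertex set of `A` -/
def graph (A : BipGraph V) : SimpleGraph {x : V // x ∈ A.verts} where
  Adj x y := (x.1, y.1) ∈ A.E ∨ (y.1, x.1) ∈ A.E
  symm := by
    constructor
    intro x y h
    exact h.symm
  loopless := by
    constructor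
    intro x h
    have hx : (x.1, x.1) ∈ A.E := by rcases h with h | h <;> exact h
    have hmem := A.E_sub hx
    rw [Finset.mem_product] at hmem
    exact Finset.disjoint_left.mp A.disj hmem.1 hmem.2

/-- `CC A` is the number of connected components of `A` (isolated vertices count). -/
def CC (A : BipGraph V) : ℕ := Nat.card A.graph.ConnectedComponent

/-- `k A = v A - CC A` -/
def k (A : BipGraph V) : ℕ := A.v - A.CC

/-- `A` is complete if every left-right pair is an edge. -/
def Complete (A : BipGraph V) : Prop := A.E = A.L ×ˢ A.R

/-- `A` is balanced if its parts differ in size by at most one. -/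
def Balanced (A : BipGraph V) : Prop := ((A.L.card : ℤ) - (A.R.card : ℤ)).natAbs ≤ 1

/-- `A` is null if it has no edges. -/
def Null (A : BipGraph V) : Prop := A.E = ∅

/-- the induced subgraph of `A` on a set `S` of vertices: the vertices of `A`
belonging to `S`, together with all edges of `A` between them. -/
def induce (A : BipGraph V) (S : Finset V) : BipGraph V where
  L := A.L ∩ S
  R := A.R ∩ S
  disj := A.disj.mono Finset.inter_subset_left Finset.inter_subset_left
  E := A.E.filter (fun p => p.1 ∈ S ∧ p.2 ∈ S)
  E_sub := by
    intro p hp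
    rw [Finset.mem_filter] at hp
    have hmem := A.E_sub hp.1
    rw [Finset.mem_product] at hmem ⊢
    exact ⟨Finset.mem_inter.mpr ⟨hmem.1, hp.2.1⟩, Finset.mem_inter.mpr ⟨hmem.2, hp.2.2⟩⟩

/-- the degree of a vertex: the number of edges incident to it -/
def deg (A : BipGraph V) (x : V) : ℕ :=
  (A.E.filter (fun p => p.1 = x ∨ p.2 = x)).card

/-- `A` is almost `ℓ`-complete: the two parts have sizes within `0.01 * ℓ` of `ℓ`,
and every vertex has degree at least `0.9 * ℓ`. -/
def AlmostComplete (ℓ : ℕ) (A : BipGraph V) : Prop :=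
  |(A.L.card : ℝ) - (ℓ : ℝ)| ≤ 0.01 * ℓ ∧ |(A.R.card : ℝ) - (ℓ : ℝ)| ≤ 0.01 * ℓ ∧
  ∀ x ∈ A.verts, (0.9 : ℝ) * ℓ ≤ (A.deg x : ℝ)

/-- the disjoint union of two vertex-disjoint bipartite graphs -/
def disjUnion (A B : BipGraph V) (h : Disjoint A.verts B.verts) : BipGraph V where
  L := A.L ∪ B.L
  R := A.R ∪ B.R
  disj := by
    have h1 : Disjoint A.L B.R := h.mono Finset.subset_union_left Finset.subset_union_right
    have h2 : Disjoint B.L A.R := h.symm.mono Finset.subset_union_left Finset.subset_union_right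
    rw [Finset.disjoint_union_left, Finset.disjoint_union_right, Finset.disjoint_union_right]
    exact ⟨⟨A.disj, h1⟩, ⟨h2, B.disj⟩⟩
  E := A.E ∪ B.E
  E_sub := by
    intro p hp
    rw [Finset.mem_union] at hp
    rw [Finset.mem_product]
    rcases hp with hp | hp
    · have := A.E_sub hp; rw [Finset.mem_product] at this
      exact ⟨Finset.mem_union_left _ this.1, Finset.mem_union_left _ this.2⟩
    · have := B.E_sub hp; rw [Finset.mem_product] at this
      exact ⟨Finset.mem_union_right _ this.1, Finset.mem_union_right _ this.2⟩

end BipGraph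

/-- `estar (2*b) = b^2` and `estar (2*b+1) = b*(b+1)`; i.e. `⌊c/2⌋ * ⌈c/2⌉`. -/
def estar (c : ℕ) : ℕ := (c / 2) * ((c + 1) / 2)



lemma estar_succ (n : ℕ) : estar (n+1) = estar n + (n+1)/2 := by
  have h : (n+1+1)/2 = n/2 + 1 := by omega
  rw [estar, estar, h]; ring

lemma estar_mono : Monotone estar := by
  intro a b hab
  exact Nat.mul_le_mul (Nat.div_le_div_right hab) (Nat.div_le_div_right (by omega))

lemma mul_le_estar (a b : ℕ) : a * b ≤ estar (a + b) := by
  rcases Nat.even_or_odd (a+b) with ⟨m, hm⟩ | ⟨m, hm⟩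
  · have h1 : (a+b)/2 = m := by omega
    have h2 : (a+b+1)/2 = m := by omega
    rw [estar, h1, h2]
    zify
    nlinarith [sq_nonneg ((a:ℤ) - b)]
  · have h1 : (a+b)/2 = m := by omega
    have h2 : (a+b+1)/2 = m+1 := by omega
    rw [estar, h1, h2]
    zify
    rcases le_or_gt a m with h | h
    · nlinarith
    · nlinarith

lemma estar_two_mul (x : ℕ) : estar (2*x) = x*x := by
  have h1 : 2*x/2 = x := by omega
  have h2 : (2*x+1)/2 = x := by omega
  rw [estar, h1, h2]

lemma estar_odd (x : ℕ) : estar (2*x+1) = x*(x+1) := by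
  have h1 : (2*x+1)/2 = x := by omega
  have h2 : (2*x+1+1)/2 = x+1 := by omega
  rw [estar, h1, h2]

lemma estar_add_le {a b : ℕ} (ha : 1 ≤ a) (hb : 1 ≤ b) :
    estar a + estar b ≤ estar (a + b - 1) := by
  rcases Nat.even_or_odd a with ⟨x, hx⟩ | ⟨x, hx⟩ <;>
    rcases Nat.even_or_odd b with ⟨y, hy⟩ | ⟨y, hy⟩
  · have hx' : a = 2*x := by omega
    have hy' : b = 2*y := by omega
    have hab : 2*x + 2*y - 1 = 2*(x+y-1)+1 := by omega
    rw [hx', hy', hab, estar_two_mul, estar_two_mul, estar_odd]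
    have hx1 : 1 ≤ x := by omega
    have hy1 : 1 ≤ y := by omega
    zify
    have : (1:ℤ) ≤ x := by exact_mod_cast hx1
    have : (1:ℤ) ≤ y := by exact_mod_cast hy1
    have hc : ((x + y - 1 : ℕ) : ℤ) = (x:ℤ) + y - 1 := by omega
    rw [hc]
    nlinarith
  · have hx' : a = 2*x := by omega
    have hy' : b = 2*y+1 := by omega
    have hab : 2*x + (2*y+1) - 1 = 2*(x+y) := by omega
    rw [hx', hy', hab, estar_two_mul, estar_odd, estar_two_mul]
    have hx1 : 1 ≤ x := by omega
    nlinarith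
  · have hx' : a = 2*x+1 := by omega
    have hy' : b = 2*y := by omega
    have hab : 2*x+1 + 2*y - 1 = 2*(x+y) := by omega
    rw [hx', hy', hab, estar_odd, estar_two_mul, estar_two_mul]
    have hy1 : 1 ≤ y := by omega
    nlinarith
  · have hx' : a = 2*x+1 := by omega
    have hy' : b = 2*y+1 := by omega
    have hab : 2*x+1 + (2*y+1) - 1 = 2*(x+y)+1 := by omega
    rw [hx', hy', hab, estar_odd, estar_odd, estar_odd]
    nlinarith

lemma sum_estar_le {ι : Type*} [DecidableEq ι] (s : Finset ι) (n : ι → ℕ)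
    (h : ∀ i ∈ s, 1 ≤ n i) :
    ∑ i ∈ s, estar (n i) ≤ estar (∑ i ∈ s, (n i - 1) + 1) := by
  induction s using Finset.induction with
  | empty => simp [estar]
  | @insert a s ha ih =>
    rw [Finset.sum_insert ha, Finset.sum_insert ha]
    have h1 : ∑ i ∈ s, estar (n i) ≤ estar (∑ i ∈ s, (n i - 1) + 1) :=
      ih (fun i hi => h i (Finset.mem_insert_of_mem hi))
    have ha1 : 1 ≤ n a := h a (Finset.mem_insert_self a s)
    calc estar (n a) + ∑ i ∈ s, estar (n i)
        ≤ estar (n a) + estar (∑ i ∈ s, (n i - 1) + 1) := by omega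
      _ ≤ estar (n a + (∑ i ∈ s, (n i - 1) + 1) - 1) := estar_add_le ha1 (by omega)
      _ = estar (n a - 1 + ∑ i ∈ s, (n i - 1) + 1) := by congr 1; omega

namespace BipGraph
variable {V : Type} [DecidableEq V]

lemma e_le_estar (A : BipGraph V) : A.e ≤ estar (A.k + 1) := by
  classical
  by_cases hv : A.verts = ∅
  · have hL : A.L = ∅ := by
      have := Finset.subset_union_left (s₁ := A.L) (s₂ := A.R)
      rw [← verts, hv] at this
      exact Finset.subset_empty.mp this
    have hE : A.E = ∅ := by
      apply Finset.subset_empty.mp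
      intro p hp
      have := A.E_sub hp
      rw [Finset.mem_product, hL] at this
      exact absurd this.1 (Finset.notMem_empty _)
    simp [e, hE]
  · -- nonempty case
    haveI hne : Nonempty {x : V // x ∈ A.verts} := by
      obtain ⟨x, hx⟩ := Finset.nonempty_iff_ne_empty.mpr hv
      exact ⟨⟨x, hx⟩⟩
    set G := A.graph with hG
    haveI : Finite G.ConnectedComponent := Quot.finite _
    haveI : Fintype G.ConnectedComponent := Fintype.ofFinite _
    haveI : Nonempty G.ConnectedComponent := ⟨G.connectedComponentMk hne.some⟩
    haveI : Inhabited G.ConnectedComponent := Classical.inhabited_of_nonempty inferInstance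
    let fV : V → G.ConnectedComponent := fun x =>
      if h : x ∈ A.verts then G.connectedComponentMk ⟨x, h⟩ else default
    let fE : V × V → G.ConnectedComponent := fun p => fV p.1
    set n : G.ConnectedComponent → ℕ :=
      fun K => (A.verts.filter (fun x => fV x = K)).card with hn
    -- vertex fibers
    have hVsum : A.v = ∑ K : G.ConnectedComponent, n K :=
      Finset.card_eq_sum_card_fiberwise (fun x _ => Finset.mem_univ _)
    have hEsum : A.e = ∑ K : G.ConnectedComponent,
        (A.E.filter (fun p => fE p = K)).card :=
      Finset.card_eq_sum_card_fiberwise (fun p _ => Finset.mem_univ _)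
    -- fibers nonempty
    have hfib : ∀ K : G.ConnectedComponent, 1 ≤ n K := by
      intro K
      obtain ⟨x, hx⟩ := Quot.exists_rep K
      rw [Nat.one_le_iff_ne_zero, Ne, Finset.card_eq_zero, ← Ne,
        ← Finset.nonempty_iff_ne_empty]
      refine ⟨x.1, Finset.mem_filter.mpr ⟨x.2, ?_⟩⟩
      simp only [fV, dif_pos x.2]
      exact hx
    -- per-component bound
    have hcomp : ∀ K : G.ConnectedComponent,
        (A.E.filter (fun p => fE p = K)).card ≤
        estar (n K) := by
      intro K
      have hsub : A.E.filter (fun p => fE p = K) ⊆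
          (A.L.filter (fun x => fV x = K)) ×ˢ (A.R.filter (fun x => fV x = K)) := by
        intro p hp
        rw [Finset.mem_filter] at hp
        obtain ⟨hpE, hpK⟩ := hp
        have hLR := A.E_sub hpE
        rw [Finset.mem_product] at hLR
        have h1 : p.1 ∈ A.verts := Finset.mem_union_left _ hLR.1
        have h2 : p.2 ∈ A.verts := Finset.mem_union_right _ hLR.2
        have hadj : G.Adj ⟨p.1, h1⟩ ⟨p.2, h2⟩ := Or.inl hpE
        have hsame : G.connectedComponentMk ⟨p.1, h1⟩ = G.connectedComponentMk ⟨p.2, h2⟩ :=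
          SimpleGraph.ConnectedComponent.connectedComponentMk_eq_of_adj hadj
        have hf1 : fV p.1 = K := by simpa only [fE] using hpK
        have hf2 : fV p.2 = K := by
          simp only [fV, dif_pos h2]
          simp only [fV, dif_pos h1] at hf1
          rw [← hsame]; exact hf1
        rw [Finset.mem_product]
        exact ⟨Finset.mem_filter.mpr ⟨hLR.1, hf1⟩, Finset.mem_filter.mpr ⟨hLR.2, hf2⟩⟩
      calc (A.E.filter (fun p => fE p = K)).card
          ≤ ((A.L.filter (fun x => fV x = K)) ×ˢ (A.R.filter (fun x => fV x = K))).card :=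
            Finset.card_le_card hsub
        _ = (A.L.filter (fun x => fV x = K)).card * (A.R.filter (fun x => fV x = K)).card :=
            Finset.card_product _ _
        _ ≤ estar ((A.L.filter (fun x => fV x = K)).card
              + (A.R.filter (fun x => fV x = K)).card) := mul_le_estar _ _
        _ = estar (n K) := by
            have hsplit : A.verts.filter (fun x => fV x = K)
                = A.L.filter (fun x => fV x = K) ∪ A.R.filter (fun x => fV x = K) :=
              Finset.filter_union _ _ _
            rw [hn]
            simp only [hsplit]
            rw [Finset.card_union_of_disjoint (Finset.disjoint_filter_filter A.disj)]
    -- combine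
    have hCC : A.CC = Fintype.card G.ConnectedComponent := Nat.card_eq_fintype_card
    have hk : A.k + 1 = ∑ K : G.ConnectedComponent, (n K - 1) + 1 := by
      have h1 : ∑ K : G.ConnectedComponent, (n K - 1) + Fintype.card G.ConnectedComponent
          = ∑ K : G.ConnectedComponent, n K := by
        rw [← Finset.card_univ, Finset.card_eq_sum_ones, ← Finset.sum_add_distrib]
        exact Finset.sum_congr rfl fun K _ => by have := hfib K; omega
      have h2 : A.v = ∑ K : G.ConnectedComponent, n K := hVsum
      rw [k, hCC]
      omega
    calc A.e = ∑ K : G.ConnectedComponent, (A.E.filter (fun p => fE p = K)).card := hEsum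
      _ ≤ ∑ K : G.ConnectedComponent, estar (n K) := Finset.sum_le_sum fun K _ => hcomp K
      _ ≤ estar (∑ K : G.ConnectedComponent, (n K - 1) + 1) :=
          sum_estar_le _ _ fun K _ => hfib K
      _ = estar (A.k + 1) := by rw [hk]


lemma estar_mono' : Monotone estar := estar_mono

def mkComplete (o c : ℕ) : BipGraph ℕ where
  L := Finset.Ico o (o + (c+1)/2)
  R := Finset.Ico (o + (c+1)/2) (o + c + 1)
  disj := Finset.Ico_disjoint_Ico_consecutive _ _ _
  E := Finset.Ico o (o + (c+1)/2) ×ˢ Finset.Ico (o + (c+1)/2) (o + c + 1)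
  E_sub := le_refl _

lemma mkComplete_verts (o c : ℕ) : (mkComplete o c).verts = Finset.Ico o (o + c + 1) :=
  Finset.Ico_union_Ico_eq_Ico (Nat.le_add_right o _) (by omega)

lemma mkComplete_e (o c : ℕ) : (mkComplete o c).e = estar (c+1) := by
  show (Finset.Ico o (o + (c+1)/2) ×ˢ Finset.Ico (o + (c+1)/2) (o + c + 1)).card = _
  rw [Finset.card_product, Nat.card_Ico, Nat.card_Ico, estar]
  have h1 : o + (c+1)/2 - o = (c+1)/2 := by omega
  have h2 : o + c + 1 - (o + (c+1)/2) = (c+1+1)/2 := by omega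
  rw [h1, h2]

lemma mkComplete_k (o c : ℕ) : (mkComplete o c).k ≤ c := by
  have hv : (mkComplete o c).v = c + 1 := by
    rw [v, mkComplete_verts, Nat.card_Ico]; omega
  have hne : Nonempty {x // x ∈ (mkComplete o c).verts} :=
    ⟨⟨o, by rw [mkComplete_verts]; rw [Finset.mem_Ico]; omega⟩⟩
  haveI : Finite (mkComplete o c).graph.ConnectedComponent := Quot.finite _
  haveI : Nonempty (mkComplete o c).graph.ConnectedComponent :=
    ⟨(mkComplete o c).graph.connectedComponentMk hne.some⟩
  have hCC : 1 ≤ (mkComplete o c).CC := Nat.card_pos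
  rw [k]; omega

lemma disjUnion_e (B C : BipGraph ℕ) (h : Disjoint B.verts C.verts) :
    (B.disjUnion C h).e = B.e + C.e := by
  have hd : Disjoint B.E C.E := by
    rw [Finset.disjoint_left]
    intro p hpB hpC
    have h1 := B.E_sub hpB
    have h2 := C.E_sub hpC
    rw [Finset.mem_product] at h1 h2
    exact Finset.disjoint_left.mp h (Finset.mem_union_left _ h1.1)
      (Finset.mem_union_left _ h2.1)
  show (B.E ∪ C.E).card = _
  rw [Finset.card_union_of_disjoint hd]
  rfl


end BipGraph

/-- `f c d` is the maximum of `e(A)` over bipartite graphs `A = B ⊔ C` with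
`k(B) ≤ c` and `k(C) ≤ d`. -/
def fmax (c d : ℕ) : ℕ :=
  sSup {n : ℕ | ∃ (B C : BipGraph ℕ) (h : Disjoint B.verts C.verts),
    B.k ≤ c ∧ C.k ≤ d ∧ (B.disjUnion C h).e = n}

/-- (1) `f(c,d) = e*(c+1) + e*(d+1)`; (2) if `1 ≤ d ≤ c` then
`f(c+1, d-1) ≥ f(c,d)`. -/
theorem fmax_eq_and_mono :
    (∀ c d : ℕ, fmax c d = estar (c + 1) + estar (d + 1)) ∧
    (∀ c d : ℕ, 1 ≤ d → d ≤ c → fmax c d ≤ fmax (c + 1) (d - 1)) := by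
  constructor
  · intro c d
    have hdisj : Disjoint (BipGraph.mkComplete 0 c).verts
        (BipGraph.mkComplete (c+1) d).verts := by
      rw [BipGraph.mkComplete_verts, BipGraph.mkComplete_verts]
      have h0 : 0 + c + 1 = c + 1 := by omega
      rw [h0]
      exact Finset.Ico_disjoint_Ico_consecutive 0 (c+1) (c+1+d+1)
    have hmem : estar (c+1) + estar (d+1) ∈ {n : ℕ | ∃ (B C : BipGraph ℕ)
        (h : Disjoint B.verts C.verts),
        B.k ≤ c ∧ C.k ≤ d ∧ (B.disjUnion C h).e = n} := by
      refine ⟨BipGraph.mkComplete 0 c, BipGraph.mkComplete (c+1) d, hdisj,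
        BipGraph.mkComplete_k _ _, BipGraph.mkComplete_k _ _, ?_⟩
      rw [BipGraph.disjUnion_e, BipGraph.mkComplete_e, BipGraph.mkComplete_e]
    have hub : ∀ n ∈ {n : ℕ | ∃ (B C : BipGraph ℕ)
        (h : Disjoint B.verts C.verts),
        B.k ≤ c ∧ C.k ≤ d ∧ (B.disjUnion C h).e = n},
        n ≤ estar (c+1) + estar (d+1) := by
      rintro n ⟨B, C, h, hB, hC, rfl⟩
      calc (B.disjUnion C h).e = B.e + C.e := BipGraph.disjUnion_e B C h
        _ ≤ estar (B.k + 1) + estar (C.k + 1) :=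
            add_le_add (BipGraph.e_le_estar B) (BipGraph.e_le_estar C)
        _ ≤ estar (c+1) + estar (d+1) :=
            add_le_add (estar_mono (by omega)) (estar_mono (by omega))
    exact le_antisymm (csSup_le ⟨_, hmem⟩ hub) (le_csSup ⟨_, hub⟩ hmem)
  · intro c d hd hdc
    have main : ∀ c d : ℕ, fmax c d = estar (c + 1) + estar (d + 1) := by
      intro c d
      have hdisj : Disjoint (BipGraph.mkComplete 0 c).verts
          (BipGraph.mkComplete (c+1) d).verts := by
        rw [BipGraph.mkComplete_verts, BipGraph.mkComplete_verts]
        have h0 : 0 + c + 1 = c + 1 := by omega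
        rw [h0]
        exact Finset.Ico_disjoint_Ico_consecutive 0 (c+1) (c+1+d+1)
      have hmem : estar (c+1) + estar (d+1) ∈ {n : ℕ | ∃ (B C : BipGraph ℕ)
          (h : Disjoint B.verts C.verts),
          B.k ≤ c ∧ C.k ≤ d ∧ (B.disjUnion C h).e = n} := by
        refine ⟨BipGraph.mkComplete 0 c, BipGraph.mkComplete (c+1) d, hdisj,
          BipGraph.mkComplete_k _ _, BipGraph.mkComplete_k _ _, ?_⟩
        rw [BipGraph.disjUnion_e, BipGraph.mkComplete_e, BipGraph.mkComplete_e]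
      have hub : ∀ n ∈ {n : ℕ | ∃ (B C : BipGraph ℕ)
          (h : Disjoint B.verts C.verts),
          B.k ≤ c ∧ C.k ≤ d ∧ (B.disjUnion C h).e = n},
          n ≤ estar (c+1) + estar (d+1) := by
        rintro n ⟨B, C, h, hB, hC, rfl⟩
        calc (B.disjUnion C h).e = B.e + C.e := BipGraph.disjUnion_e B C h
          _ ≤ estar (B.k + 1) + estar (C.k + 1) :=
              add_le_add (BipGraph.e_le_estar B) (BipGraph.e_le_estar C)
          _ ≤ estar (c+1) + estar (d+1) :=
              add_le_add (estar_mono (by omega)) (estar_mono (by omega))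
      exact le_antisymm (csSup_le ⟨_, hmem⟩ hub) (le_csSup ⟨_, hub⟩ hmem)
    rw [main, main]
    have hd1 : d - 1 + 1 = d := by omega
    rw [hd1]
    have e1 := estar_succ (c+1)
    have e2 := estar_succ d
    have h3 : (d+1)/2 ≤ (c+1+1)/2 := by omega
    omega
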